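/- arXiv:1706.00643 — 5 statements merged into one kernel-verified Lean document; each statement's English description precedes it below -/
import Mathlib

section
/- Let A be an n×n matrix over the max-plus algebra with Tr(A) ≤ 𝟙, where Tr(A) = tr A ⊕ tr A² ⊕ ⋯ ⊕ tr Aⁿ. Then for every integer k ≥ 0, A^k ≤ A* entrywise, where A* = I ⊕ A ⊕ ⋯ ⊕ A^{n-1}. -/
open Finset

/-- The max-plus identity matrix: `0` on the diagonal, `-∞` elsewhere. -/
noncomputable def mpId (n : ℕ) : Fin n → Fin n → WithBot ℝ :=
  fun i j => if i = j then ((0 : ℝ) : WithBot ℝ) else ⊥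

/-- Max-plus matrix multiplication. -/
noncomputable def mpMul {n : ℕ} (A B : Fin n → Fin n → WithBot ℝ) :
    Fin n → Fin n → WithBot ℝ :=
  fun i j => univ.sup fun k => A i k + B k j

/-- Max-plus matrix power. -/
noncomputable def mpPow {n : ℕ} (A : Fin n → Fin n → WithBot ℝ) :
    ℕ → Fin n → Fin n → WithBot ℝ
  | 0 => mpId n
  | m + 1 => mpMul A (mpPow A m)

/-- Max-plus trace: the maximum diagonal entry. -/
noncomputable def mpTr {n : ℕ} (A : Fin n → Fin n → WithBot ℝ) : WithBot ℝ :=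
  univ.sup fun i => A i i

/-- The Kleene star `A* = I ⊕ A ⊕ ⋯ ⊕ A^(n-1)`. -/
noncomputable def mpStar {n : ℕ} (A : Fin n → Fin n → WithBot ℝ) :
    Fin n → Fin n → WithBot ℝ :=
  fun i j => (range n).sup fun m => mpPow A m i j

/-- Conjugate transpose: entry `(i,j)` is `-a_{ji}` if `a_{ji} ≠ -∞`, else `-∞`. -/
noncomputable def mpConj {m n : ℕ} (A : Fin m → Fin n → WithBot ℝ) :
    Fin n → Fin m → WithBot ℝ :=
  fun i j => WithBot.map (fun a => -a) (A j i)

/-- Max-plus matrix-vector product. -/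
noncomputable def mpMulVec {n : ℕ} (A : Fin n → Fin n → WithBot ℝ)
    (x : Fin n → WithBot ℝ) : Fin n → WithBot ℝ :=
  fun i => univ.sup fun j => A i j + x j

/-- Weight of the walk `p 0 → p 1 → ⋯ → p k`. -/
noncomputable def mpWgt {n : ℕ} (A : Fin n → Fin n → WithBot ℝ) (k : ℕ)
    (p : ℕ → Fin n) : WithBot ℝ :=
  ∑ t ∈ Finset.range k, A (p t) (p (t + 1))

lemma mpWgt_le_pow {n : ℕ} (A : Fin n → Fin n → WithBot ℝ) :
    ∀ (k : ℕ) (p : ℕ → Fin n), mpWgt A k p ≤ mpPow A k (p 0) (p k) := by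
  intro k
  induction k with
  | zero => intro p; simp [mpWgt, mpPow, mpId]
  | succ k ih =>
    intro p
    have h1 : mpWgt A (k + 1) p = A (p 0) (p 1) + mpWgt A k (fun t => p (t + 1)) := by
      rw [mpWgt, Finset.sum_range_succ', add_comm]; rfl
    rw [h1]
    calc A (p 0) (p 1) + mpWgt A k (fun t => p (t + 1))
        ≤ A (p 0) (p 1) + mpPow A k (p 1) (p (k + 1)) :=
          add_le_add le_rfl (ih (fun t => p (t + 1)))
      _ ≤ mpPow A (k + 1) (p 0) (p (k + 1)) :=
          Finset.le_sup (f := fun l => A (p 0) l + mpPow A k l (p (k + 1)))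
            (Finset.mem_univ (p 1))

lemma mpPow_le_wgt {n : ℕ} (A : Fin n → Fin n → WithBot ℝ) :
    ∀ (k : ℕ) (i j : Fin n), mpPow A k i j = ⊥ ∨
      ∃ p : ℕ → Fin n, p 0 = i ∧ p k = j ∧ mpPow A k i j ≤ mpWgt A k p := by
  intro k
  induction k with
  | zero =>
    intro i j
    by_cases h : i = j
    · subst h
      exact Or.inr ⟨fun _ => i, rfl, rfl, by simp [mpPow, mpId, mpWgt]⟩
    · exact Or.inl (by simp [mpPow, mpId, h])
  | succ k ih =>
    intro i j
    by_cases hb : mpPow A (k + 1) i j = ⊥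
    · exact Or.inl hb
    right
    have hne : (Finset.univ : Finset (Fin n)).Nonempty := ⟨i, Finset.mem_univ i⟩
    obtain ⟨l, -, hl⟩ :=
      Finset.exists_mem_eq_sup Finset.univ hne (fun l => A i l + mpPow A k l j)
    have heq : mpPow A (k + 1) i j = A i l + mpPow A k l j := hl
    have hlb : mpPow A k l j ≠ ⊥ := by
      intro h
      rw [heq, h] at hb
      simp at hb
    rcases ih l j with h | ⟨p, hp0, hpk, hle⟩
    · exact absurd h hlb
    refine ⟨fun t => if t = 0 then i else p (t - 1), by simp, by simp [hpk], ?_⟩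
    have hw : mpWgt A (k + 1) (fun t => if t = 0 then i else p (t - 1)) =
        A i l + mpWgt A k p := by
      rw [mpWgt, Finset.sum_range_succ', add_comm]
      simp [hp0, mpWgt]
    rw [hw, heq]
    exact add_le_add le_rfl hle

/-- If `Tr(A) ≤ 𝟙` (i.e. `tr(A^m) ≤ 0` for all `m = 1,…,n`), then for every
`k ≥ 0`, `A^k ≤ A*` entrywise, where `A* = I ⊕ A ⊕ ⋯ ⊕ A^(n-1)`. -/
theorem maxplus_pow_le_star (n : ℕ) (A : Fin n → Fin n → WithBot ℝ)
    (hTr : ∀ m : ℕ, 1 ≤ m → m ≤ n → mpTr (mpPow A m) ≤ ((0 : ℝ) : WithBot ℝ)) :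
    ∀ (k : ℕ) (i j : Fin n), mpPow A k i j ≤ mpStar A i j := by
  intro k
  induction k using Nat.strong_induction_on with
  | _ k IH =>
  intro i j
  by_cases hk : k < n
  · exact Finset.le_sup (f := fun m => mpPow A m i j) (Finset.mem_range.mpr hk)
  push_neg at hk
  by_cases hb : mpPow A k i j = ⊥
  · rw [hb]; exact bot_le
  rcases mpPow_le_wgt A k i j with h | ⟨p, hp0, hpk, hle⟩
  · exact absurd h hb
  -- pigeonhole: among p 0, …, p n two vertices coincide
  have hcard : Fintype.card (Fin n) < Fintype.card (Fin (n + 1)) := by simp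
  obtain ⟨a, b, hab, hfab⟩ :=
    Fintype.exists_ne_map_eq_of_card_lt (fun u : Fin (n + 1) => p (u : ℕ)) hcard
  obtain ⟨s, t, hst, htn, hpst⟩ :
      ∃ s t : ℕ, s < t ∧ t ≤ n ∧ p s = p t := by
    rcases lt_or_gt_of_ne hab with h | h
    · exact ⟨a, b, h, Nat.lt_succ_iff.mp b.isLt, hfab⟩
    · exact ⟨b, a, h, Nat.lt_succ_iff.mp a.isLt, hfab.symm⟩
  set d : ℕ := t - s with hd
  have hd1 : 1 ≤ d := by omega
  have hdn : d ≤ n := by omega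
  have htk : t ≤ k := le_trans htn hk
  have hsd : s + d = t := by omega
  -- the middle cycle has weight ≤ 0
  have hmid : (∑ u ∈ Finset.Ico s t, A (p u) (p (u + 1))) ≤ (0 : WithBot ℝ) := by
    have h1 : (∑ u ∈ Finset.Ico s t, A (p u) (p (u + 1))) =
        mpWgt A d (fun v => p (s + v)) := by
      rw [Finset.sum_Ico_eq_sum_range, mpWgt]
      rfl
    rw [h1]
    have h2 := mpWgt_le_pow A d (fun v => p (s + v))
    have h3 : p (s + 0) = p s := by norm_num
    have h4 : p (s + d) = p s := by rw [hsd, hpst]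
    rw [h3, h4] at h2
    refine le_trans h2 (le_trans ?_ (hTr d hd1 hdn))
    exact Finset.le_sup (f := fun v => mpPow A d v v) (Finset.mem_univ (p s))
  -- the spliced walk
  set q : ℕ → Fin n := fun u => if u < s then p u else p (u + d) with hq
  have hq0 : q 0 = i := by
    by_cases h0 : 0 < s
    · simp only [hq, if_pos h0, hp0]
    · have hs0 : s = 0 := by omega
      simp only [hq, if_neg (by omega : ¬ (0 : ℕ) < s)]
      rw [show 0 + d = t by omega, ← hpst, hs0, hp0]
  have hqk : q (k - d) = j := by
    simp only [hq, if_neg (by omega : ¬ k - d < s)]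
    rw [show k - d + d = k by omega, hpk]
  have hsplit : mpWgt A (k - d) q =
      (∑ u ∈ Finset.Ico 0 s, A (p u) (p (u + 1))) +
      (∑ u ∈ Finset.Ico t k, A (p u) (p (u + 1))) := by
    rw [mpWgt, Finset.range_eq_Ico,
      ← Finset.sum_Ico_consecutive _ (by omega : 0 ≤ s) (by omega : s ≤ k - d)]
    congr 1
    · refine Finset.sum_congr rfl fun u hu => ?_
      rw [Finset.mem_Ico] at hu
      have hu1 : q u = p u := by simp only [hq, if_pos hu.2]
      have hu2 : q (u + 1) = p (u + 1) := by
        by_cases h : u + 1 < s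
        · simp only [hq, if_pos h]
        · have : u + 1 = s := by omega
          simp only [hq, if_neg h, this]
          rw [hsd, ← hpst]
          simp
      rw [hu1, hu2]
    · rw [Finset.sum_Ico_eq_sum_range, Finset.sum_Ico_eq_sum_range]
      have hlen : k - d - s = k - t := by omega
      rw [hlen]
      refine Finset.sum_congr rfl fun v hv => ?_
      rw [Finset.mem_range] at hv
      have h1 : q (s + v) = p (t + v) := by
        simp only [hq, if_neg (by omega : ¬ s + v < s)]
        congr 1
        omega
      have h2 : q (s + v + 1) = p (t + v + 1) := by
        simp only [hq, if_neg (by omega : ¬ s + v + 1 < s)]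
        congr 1
        omega
      rw [h1, h2]
  have hwk : mpWgt A k p =
      ((∑ u ∈ Finset.Ico 0 s, A (p u) (p (u + 1))) +
       (∑ u ∈ Finset.Ico t k, A (p u) (p (u + 1)))) +
      (∑ u ∈ Finset.Ico s t, A (p u) (p (u + 1))) := by
    rw [mpWgt, Finset.range_eq_Ico,
      ← Finset.sum_Ico_consecutive _ (by omega : 0 ≤ s) (by omega : s ≤ k),
      ← Finset.sum_Ico_consecutive _ (by omega : s ≤ t) (by omega : t ≤ k)]
    abel
  have hstep : mpWgt A k p ≤ mpWgt A (k - d) q := by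
    rw [hwk, hsplit]
    calc ((∑ u ∈ Finset.Ico 0 s, A (p u) (p (u + 1))) +
          (∑ u ∈ Finset.Ico t k, A (p u) (p (u + 1)))) +
          (∑ u ∈ Finset.Ico s t, A (p u) (p (u + 1)))
        ≤ ((∑ u ∈ Finset.Ico 0 s, A (p u) (p (u + 1))) +
          (∑ u ∈ Finset.Ico t k, A (p u) (p (u + 1)))) + 0 :=
          add_le_add le_rfl hmid
      _ = _ := add_zero _
  have hfin : mpWgt A (k - d) q ≤ mpPow A (k - d) i j := by
    have := mpWgt_le_pow A (k - d) q
    rwa [hq0, hqk] at this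
  exact le_trans hle (le_trans hstep (le_trans hfin (IH (k - d) (by omega) i j)))
end

section
/- Let A be an n×n matrix over the max-plus algebra with Tr(A) ≤ 𝟙. Then A⁺ = A A* ≤ A*, where A⁺ = A ⊕ A² ⊕ ⋯ ⊕ Aⁿ and A* = I ⊕ A ⊕ ⋯ ⊕ A^{n-1}. -/
open Finset

lemma add_sup_eq {ι : Type*} (a : WithBot ℝ) (s : Finset ι) (f : ι → WithBot ℝ) :
    a + s.sup f = s.sup (fun b => a + f b) := by
  induction s using Finset.cons_induction with
  | empty => simp
  | cons x s hx ih =>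
    rw [Finset.sup_cons, Finset.sup_cons, ← ih]
    rcases le_total (f x) (s.sup f) with h | h
    · rw [sup_eq_right.2 h, sup_eq_right.2 (add_le_add_right h a)]
    · rw [sup_eq_left.2 h, sup_eq_left.2 (add_le_add_right h a)]

noncomputable def wt {n : ℕ} (A : Fin n → Fin n → WithBot ℝ) (p : ℕ → Fin n) (m : ℕ) :
    WithBot ℝ := ∑ k ∈ range m, A (p k) (p (k + 1))

lemma wt_succ' {n : ℕ} (A : Fin n → Fin n → WithBot ℝ) (p : ℕ → Fin n) (m : ℕ) :
    wt A p (m + 1) = A (p 0) (p 1) + wt A (fun k => p (k + 1)) m := by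
  unfold wt
  rw [Finset.sum_range_succ', add_comm]

lemma wt_le_pow {n : ℕ} (A : Fin n → Fin n → WithBot ℝ) :
    ∀ (m : ℕ) (p : ℕ → Fin n), wt A p m ≤ mpPow A m (p 0) (p m) := by
  intro m
  induction m with
  | zero => intro p; simp [wt, mpPow, mpId]
  | succ m ih =>
    intro p
    rw [wt_succ']
    calc A (p 0) (p 1) + wt A (fun k => p (k + 1)) m
        ≤ A (p 0) (p 1) + mpPow A m (p 1) (p (m + 1)) := add_le_add_right (ih _) _
      _ ≤ mpPow A (m + 1) (p 0) (p (m + 1)) :=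
          Finset.le_sup (f := fun k => A (p 0) k + mpPow A m k (p (m + 1))) (mem_univ (p 1))

lemma pow_le_wt {n : ℕ} (A : Fin n → Fin n → WithBot ℝ) :
    ∀ (m : ℕ) (i j : Fin n), mpPow A m i j = ⊥ ∨
      ∃ p : ℕ → Fin n, p 0 = i ∧ p m = j ∧ mpPow A m i j ≤ wt A p m := by
  intro m
  induction m with
  | zero =>
    intro i j
    by_cases h : i = j
    · right; exact ⟨fun _ => i, rfl, h ▸ rfl, by simp [mpPow, mpId, wt, h]⟩
    · left; simp [mpPow, mpId, h]
  | succ m ih =>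
    intro i j
    have hne : (univ : Finset (Fin n)).Nonempty := ⟨i, mem_univ i⟩
    obtain ⟨k, -, hk⟩ := Finset.exists_mem_eq_sup univ hne
      (fun k => A i k + mpPow A m k j)
    have hpow : mpPow A (m + 1) i j = A i k + mpPow A m k j := hk
    rcases ih k j with hb | ⟨p, h0, hm, hle⟩
    · left; rw [hpow, hb]; exact WithBot.add_bot _
    · right
      refine ⟨fun t => if t = 0 then i else p (t - 1), rfl, by simp [hm], ?_⟩
      have hshift : (fun t : ℕ => if t + 1 = 0 then i else p (t + 1 - 1)) = p := by
        funext t; simp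
      rw [wt_succ', hshift]
      simp only [if_pos rfl]
      have : (1 : ℕ) ≠ 0 := one_ne_zero
      rw [if_neg this]
      rw [hpow]
      have : p (1 - 1) = k := h0
      rw [this]
      exact add_le_add_right hle _

lemma pow_n_le_star {n : ℕ} (A : Fin n → Fin n → WithBot ℝ)
    (hTr : ∀ m : ℕ, 1 ≤ m → m ≤ n → mpTr (mpPow A m) ≤ ((0 : ℝ) : WithBot ℝ))
    (i j : Fin n) : mpPow A n i j ≤ mpStar A i j := by
  rcases pow_le_wt A n i j with h | ⟨p, h0, hmn, hle⟩
  · rw [h]; exact bot_le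
  · have hn : 0 < n := i.pos
    obtain ⟨a, b, hab, hbn, hpab⟩ : ∃ a b : ℕ, a < b ∧ b ≤ n ∧ p a = p b := by
      obtain ⟨x, y, hxy, hpxy⟩ := Fintype.exists_ne_map_eq_of_card_lt
        (fun t : Fin (n + 1) => p t) (by simp)
      have hne : (x : ℕ) ≠ (y : ℕ) := fun h => hxy (Fin.ext h)
      rcases lt_or_gt_of_ne hne with h | h
      · exact ⟨x, y, h, y.is_le, hpxy⟩
      · exact ⟨y, x, h, x.is_le, hpxy.symm⟩
    obtain ⟨c, hacb, hc1⟩ : ∃ c, a + c = b ∧ 1 ≤ c := ⟨b - a, by omega, by omega⟩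
    have hcn : c ≤ n := by omega
    set q : ℕ → Fin n := fun t => if t < a then p t else p (t + c) with hq
    -- middle cycle has nonpositive weight
    have hS2 : (∑ k ∈ Ico a b, A (p k) (p (k + 1))) ≤ (0 : WithBot ℝ) := by
      have h1 : (∑ k ∈ Ico a b, A (p k) (p (k + 1)))
          = wt A (fun t => p (a + t)) c := by
        rw [Finset.sum_Ico_eq_sum_range, show b - a = c from by omega]
        rfl
      rw [h1]
      calc wt A (fun t => p (a + t)) c ≤ mpPow A c (p (a + 0)) (p (a + c)) := wt_le_pow A c _
        _ = mpPow A c (p a) (p a) := by rw [add_zero, hacb, ← hpab]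
        _ ≤ mpTr (mpPow A c) :=
            Finset.le_sup (f := fun x => mpPow A c x x) (mem_univ (p a))
        _ ≤ _ := hTr c hc1 hcn
    -- splice
    have hwt : wt A p n ≤ wt A q (n - c) := by
      have hsplit1 : wt A p n = (∑ k ∈ Ico 0 a, A (p k) (p (k + 1)))
          + ((∑ k ∈ Ico a b, A (p k) (p (k + 1))) + (∑ k ∈ Ico b n, A (p k) (p (k + 1)))) := by
        unfold wt
        rw [Finset.sum_Ico_consecutive _ (by omega) hbn,
          Finset.sum_Ico_consecutive _ (by omega) (by omega), Finset.range_eq_Ico]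
      have hterm1 : ∀ k < a, A (q k) (q (k + 1)) = A (p k) (p (k + 1)) := by
        intro k hk
        have hqk : q k = p k := if_pos hk
        by_cases h : k + 1 < a
        · rw [hqk, hq]; simp only [if_pos h]
        · have hk1 : k + 1 = a := by omega
          have : q (k + 1) = p (k + 1 + c) := if_neg (by omega)
          rw [hqk, this, show k + 1 + c = b from by omega, ← hpab, ← hk1]
      have hterm3 : ∀ k, a ≤ k → A (q k) (q (k + 1)) = A (p (k + c)) (p (k + c + 1)) := by
        intro k hk
        have h1 : q k = p (k + c) := if_neg (by omega)
        have h2 : q (k + 1) = p (k + 1 + c) := if_neg (by omega)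
        rw [h1, h2, show k + 1 + c = k + c + 1 from by omega]
      have hsplit2 : wt A q (n - c) = (∑ k ∈ Ico 0 a, A (p k) (p (k + 1)))
          + (∑ k ∈ Ico b n, A (p k) (p (k + 1))) := by
        unfold wt
        rw [Finset.range_eq_Ico, ← Finset.sum_Ico_consecutive _ (by omega : 0 ≤ a) (by omega : a ≤ n - c)]
        congr 1
        · refine Finset.sum_congr rfl fun k hk => ?_
          exact hterm1 k (by simpa using (mem_Ico.1 hk).2)
        · rw [Finset.sum_Ico_eq_sum_range, Finset.sum_Ico_eq_sum_range]
          refine Finset.sum_congr (by rw [show n - c - a = n - b from by omega]) fun k _ => ?_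
          rw [hterm3 (a + k) (by omega), show a + k + c = b + k from by omega]
      rw [hsplit1, hsplit2]
      refine add_le_add_right ?_ _
      calc (∑ k ∈ Ico a b, A (p k) (p (k + 1))) + (∑ k ∈ Ico b n, A (p k) (p (k + 1)))
          ≤ 0 + (∑ k ∈ Ico b n, A (p k) (p (k + 1))) := add_le_add_left hS2 _
        _ = _ := zero_add _
    -- finish
    have hq0 : q 0 = i := by
      rcases Nat.eq_zero_or_pos a with ha0 | hpos
      · have h1 : q 0 = p (0 + c) := if_neg (by omega)
        have h2 : (0 : ℕ) + c = b := by omega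
        rw [h1, h2, ← hpab, ha0, h0]
      · have h1 : q 0 = p 0 := if_pos hpos
        rw [h1, h0]
    have hqn : q (n - c) = j := by
      have : q (n - c) = p (n - c + c) := if_neg (by omega)
      rw [this, Nat.sub_add_cancel hcn, hmn]
    calc mpPow A n i j ≤ wt A p n := hle
      _ ≤ wt A q (n - c) := hwt
      _ ≤ mpPow A (n - c) (q 0) (q (n - c)) := wt_le_pow A _ _
      _ = mpPow A (n - c) i j := by rw [hq0, hqn]
      _ ≤ mpStar A i j :=
          Finset.le_sup (f := fun l => mpPow A l i j) (mem_range.2 (by omega))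

/-- If `Tr(A) ≤ 𝟙`, then `A⁺ = A A* ≤ A*`, where `A⁺ = A ⊕ ⋯ ⊕ Aⁿ` and
`A* = I ⊕ A ⊕ ⋯ ⊕ A^(n-1)`. -/
theorem maxplus_plus_le_star (n : ℕ) (A : Fin n → Fin n → WithBot ℝ)
    (hTr : ∀ m : ℕ, 1 ≤ m → m ≤ n → mpTr (mpPow A m) ≤ ((0 : ℝ) : WithBot ℝ)) :
    (∀ i j : Fin n,
      mpMul A (mpStar A) i j = (Icc 1 n).sup fun m => mpPow A m i j) ∧
    (∀ i j : Fin n,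
      ((Icc 1 n).sup fun m => mpPow A m i j) ≤ mpStar A i j) := by
  have himg : (range n).image (· + 1) = Icc 1 n := by
    ext x
    simp only [mem_image, mem_range, mem_Icc]
    constructor
    · rintro ⟨a, ha, rfl⟩; omega
    · rintro ⟨h1, h2⟩; exact ⟨x - 1, by omega, by omega⟩
  have key : ∀ i j : Fin n,
      mpMul A (mpStar A) i j = (Icc 1 n).sup fun m => mpPow A m i j := by
    intro i j
    rw [← himg, Finset.sup_image]
    show (univ.sup fun k => A i k + (range n).sup fun m => mpPow A m k j) = _
    calc (univ.sup fun k => A i k + (range n).sup fun m => mpPow A m k j)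
        = univ.sup fun k => (range n).sup fun m => A i k + mpPow A m k j :=
          Finset.sup_congr rfl fun k _ => add_sup_eq _ _ _
      _ = (range n).sup fun m => univ.sup fun k => A i k + mpPow A m k j :=
          Finset.sup_comm _ _ _
      _ = _ := rfl
  refine ⟨key, fun i j => ?_⟩
  refine Finset.sup_le fun m hm => ?_
  obtain ⟨h1, h2⟩ := mem_Icc.1 hm
  rcases lt_or_eq_of_le h2 with h | h
  · exact Finset.le_sup (f := fun m => mpPow A m i j) (mem_range.2 h)
  · rw [h]; exact pow_n_le_star A hTr i j
end

section
/- Let A be an n×n matrix over the max-plus algebra satisfying Tr(A) ≤ 𝟙, and let u ∈ ℝⁿ be a regular vector. Then x = A* u is a regular vector satisfying A x ≤ x. -/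
open Finset

section Aux

variable {n : ℕ}

lemma mp_add_sup {ι : Type*} (s : Finset ι) (f : ι → WithBot ℝ) (c : WithBot ℝ) :
    c + s.sup f = s.sup fun j => c + f j :=
  Finset.comp_sup_eq_sup_comp (c + ·)
    (fun _ _ => (monotone_id.const_add c).map_max) (by simp)

lemma mp_sup_add {ι : Type*} (s : Finset ι) (f : ι → WithBot ℝ) (c : WithBot ℝ) :
    s.sup f + c = s.sup fun j => f j + c :=
  Finset.comp_sup_eq_sup_comp (· + c)
    (fun _ _ => (monotone_id.add_const c).map_max) (by simp)

/-- The weight of the length-`m` path `f 0, f 1, …, f m`. -/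
noncomputable def mpW (A : Fin n → Fin n → WithBot ℝ) (f : ℕ → Fin n) (m : ℕ) : WithBot ℝ :=
  ∑ t ∈ Finset.range m, A (f t) (f (t + 1))

lemma mpW_add (A : Fin n → Fin n → WithBot ℝ) (f : ℕ → Fin n) (p q : ℕ) :
    mpW A f (p + q) = mpW A f p + mpW A (fun t => f (p + t)) q := by
  induction q with
  | zero => simp [mpW]
  | succ q ih =>
      have e : p + (q + 1) = (p + q) + 1 := rfl
      simp only [mpW] at ih ⊢
      rw [e, Finset.sum_range_succ, Finset.sum_range_succ, ih, add_assoc]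
      rfl

lemma mpW_le_pow (A : Fin n → Fin n → WithBot ℝ) (m : ℕ) (f : ℕ → Fin n) :
    mpW A f m ≤ mpPow A m (f 0) (f m) := by
  induction m generalizing f with
  | zero => simp [mpW, mpPow, mpId]
  | succ m ih =>
      have h1 : mpW A f (m + 1) = A (f 0) (f 1) + mpW A (fun t => f (t + 1)) m := by
        simp only [mpW, Finset.sum_range_succ']
        rw [add_comm]
      rw [h1]
      calc A (f 0) (f 1) + mpW A (fun t => f (t + 1)) m
          ≤ A (f 0) (f 1) + mpPow A m (f 1) (f (m + 1)) := by
            exact add_le_add_right (ih fun t => f (t + 1)) _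
        _ ≤ mpPow A (m + 1) (f 0) (f (m + 1)) := by
            exact Finset.le_sup (f := fun j => A (f 0) j + mpPow A m j (f (m + 1)))
              (Finset.mem_univ (f 1))

lemma mp_pow_add_le (A : Fin n → Fin n → WithBot ℝ) (p q : ℕ) :
    ∀ i j k, mpPow A p i j + mpPow A q j k ≤ mpPow A (p + q) i k := by
  induction p with
  | zero =>
      intro i j k
      by_cases h : i = j
      · subst h; simp [mpPow, mpId]
      · simp [mpPow, mpId, h]
  | succ p ih =>
      intro i j k
      have e : (p + 1) + q = (p + q) + 1 := by omega
      rw [e]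
      show mpMul A (mpPow A p) i j + mpPow A q j k ≤ mpMul A (mpPow A (p + q)) i k
      rw [mpMul, mp_sup_add]
      apply Finset.sup_le
      intro l _
      calc A i l + mpPow A p l j + mpPow A q j k
          = A i l + (mpPow A p l j + mpPow A q j k) := by rw [add_assoc]
        _ ≤ A i l + mpPow A (p + q) l k := add_le_add_right (ih l j k) _
        _ ≤ _ := Finset.le_sup (f := fun l => A i l + mpPow A (p + q) l k)
            (Finset.mem_univ l)

lemma mp_exists_path (A : Fin n → Fin n → WithBot ℝ) (m : ℕ) :
    ∀ i k : Fin n, mpPow A m i k ≠ ⊥ →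
      ∃ f : ℕ → Fin n, f 0 = i ∧ f m = k ∧ mpPow A m i k ≤ mpW A f m := by
  induction m with
  | zero =>
      intro i k h
      have hik : i = k := by
        by_contra hik
        exact h (by simp [mpPow, mpId, hik])
      subst hik
      exact ⟨fun _ => i, rfl, rfl, by simp [mpPow, mpId, mpW]⟩
  | succ m ih =>
      intro i k h
      have hne : (Finset.univ : Finset (Fin n)).Nonempty := ⟨i, Finset.mem_univ i⟩
      obtain ⟨j, _, hj⟩ := Finset.exists_mem_eq_sup Finset.univ hne
        (fun j => A i j + mpPow A m j k)
      have hEq : mpPow A (m + 1) i k = A i j + mpPow A m j k := hj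
      have hb : mpPow A m j k ≠ ⊥ := by
        intro hbot
        rw [hEq, hbot] at h
        simp at h
      obtain ⟨f, hf0, hfm, hfle⟩ := ih j k hb
      refine ⟨fun t => if t = 0 then i else f (t - 1), by simp, by simp [hfm], ?_⟩
      have hW : mpW A (fun t => if t = 0 then i else f (t - 1)) (m + 1)
          = mpW A f m + A i j := by
        simp only [mpW, Finset.sum_range_succ']
        simp [hf0]
      rw [hW, hEq, add_comm (A i j)]
      exact add_le_add_left hfle _

lemma mp_pow_n_le_star (A : Fin n → Fin n → WithBot ℝ)
    (hTr : ∀ m : ℕ, 1 ≤ m → m ≤ n → mpTr (mpPow A m) ≤ ((0 : ℝ) : WithBot ℝ)) :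
    ∀ i k : Fin n, mpPow A n i k ≤ mpStar A i k := by
  intro i k
  by_cases h : mpPow A n i k = ⊥
  · rw [h]; exact bot_le
  obtain ⟨f, hf0, hfn, hle⟩ := mp_exists_path A n i k h
  have key : ∀ a b : ℕ, a < b → b ≤ n → f a = f b → mpPow A n i k ≤ mpStar A i k := by
    intro a b hab hbn hfab
    set c := b - a with hc
    have hc1 : 1 ≤ c := by omega
    have hcn : c ≤ n := by omega
    have hac : a + c = b := by omega
    have hsum : n = (a + c) + (n - b) := by omega
    set d := n - b with hd
    have h1 := mpW_add A f (a + c) d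
    rw [show (a + c) + d = n by omega] at h1
    have h2 : mpW A f (a + c) = mpW A f a + mpW A (fun t => f (a + t)) c :=
      mpW_add A f a c
    have b1 : mpW A f a ≤ mpPow A a i (f a) := by
      have := mpW_le_pow A a f
      rwa [hf0] at this
    have e2 : f (a + c) = f a := by rw [hac]; exact hfab.symm
    have b2 : mpW A (fun t => f (a + t)) c ≤ ((0 : ℝ) : WithBot ℝ) := by
      have h3 := mpW_le_pow A c (fun t => f (a + t))
      simp only [Nat.add_zero] at h3
      rw [e2] at h3
      refine le_trans h3 (le_trans ?_ (hTr c hc1 hcn))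
      exact Finset.le_sup (f := fun l => mpPow A c l l) (Finset.mem_univ (f a))
    have b3 : mpW A (fun t => f ((a + c) + t)) d ≤ mpPow A d (f a) k := by
      have h3 := mpW_le_pow A d (fun t => f ((a + c) + t))
      simp only [Nat.add_zero] at h3
      rw [e2, show (a + c) + d = n by omega, hfn] at h3
      exact h3
    have hcomb : mpPow A n i k ≤ mpPow A a i (f a) + mpPow A d (f a) k := by
      calc mpPow A n i k ≤ mpW A f n := hle
        _ = mpW A f a + (mpW A (fun t => f (a + t)) c
              + mpW A (fun t => f ((a + c) + t)) d) := by rw [h1, h2, add_assoc]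
        _ ≤ mpPow A a i (f a) + (((0 : ℝ) : WithBot ℝ) + mpPow A d (f a) k) :=
            add_le_add b1 (add_le_add b2 b3)
        _ = mpPow A a i (f a) + mpPow A d (f a) k := by
            rw [show ((0 : ℝ) : WithBot ℝ) = (0 : WithBot ℝ) from rfl, zero_add]
    refine le_trans (le_trans hcomb (mp_pow_add_le A a d i (f a) k)) ?_
    exact Finset.le_sup (f := fun m => mpPow A m i k)
      (Finset.mem_range.mpr (by omega))
  have hcard : (Finset.univ : Finset (Fin n)).card < (Finset.range (n + 1)).card := by
    simp
  obtain ⟨a, ha, b, hb, hab, hfab⟩ :=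
    Finset.exists_ne_map_eq_of_card_lt_of_maps_to hcard
      (fun t _ => Finset.mem_univ (f t))
  rw [Finset.mem_range] at ha hb
  rcases lt_or_gt_of_ne hab with hlt | hgt
  · exact key a b hlt (by omega) hfab
  · exact key b a hgt (by omega) hfab.symm

end Aux

/-- If `Tr(A) ≤ 𝟙` and `u ∈ ℝⁿ` is regular, then `x = A* u` is a regular
vector satisfying `A x ≤ x`. -/
theorem maxplus_star_u_solves (n : ℕ) (A : Fin n → Fin n → WithBot ℝ)
    (hTr : ∀ m : ℕ, 1 ≤ m → m ≤ n → mpTr (mpPow A m) ≤ ((0 : ℝ) : WithBot ℝ))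
    (u : Fin n → ℝ)
    (x : Fin n → WithBot ℝ)
    (hx : x = mpMulVec (mpStar A) (fun j => ((u j : ℝ) : WithBot ℝ))) :
    (∀ i : Fin n, x i ≠ ⊥) ∧ (∀ i : Fin n, mpMulVec A x i ≤ x i) := by
  subst hx
  constructor
  · intro i
    have hui : ((u i : ℝ) : WithBot ℝ) ≤ mpMulVec (mpStar A) (fun j => ((u j : ℝ) : WithBot ℝ)) i := by
      have h1 : mpId n i i ≤ mpStar A i i := by
        have h0 : mpPow A 0 i i ≤ mpStar A i i :=
          Finset.le_sup (f := fun m => mpPow A m i i) (Finset.mem_range.mpr i.pos)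
        exact h0
      have h2 : ((u i : ℝ) : WithBot ℝ) = mpId n i i + ((u i : ℝ) : WithBot ℝ) := by
        simp [mpId]
      rw [h2]
      refine le_trans (add_le_add_left h1 _) ?_
      exact Finset.le_sup (f := fun j => mpStar A i j + ((u j : ℝ) : WithBot ℝ))
        (Finset.mem_univ i)
    intro hbot
    rw [hbot] at hui
    exact absurd (le_bot_iff.mp hui) (by simp)
  · intro i
    apply Finset.sup_le
    intro j _
    rw [mpMulVec, mp_add_sup]
    apply Finset.sup_le
    intro k _
    have hstar : A i j + mpStar A j k ≤ mpStar A i k := by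
      rw [mpStar, mp_add_sup]
      apply Finset.sup_le
      intro m hm
      rw [Finset.mem_range] at hm
      have hstep : A i j + mpPow A m j k ≤ mpPow A (m + 1) i k :=
        Finset.le_sup (f := fun l => A i l + mpPow A m l k) (Finset.mem_univ j)
      refine le_trans hstep ?_
      rcases Nat.lt_or_ge (m + 1) n with hlt | hge
      · exact Finset.le_sup (f := fun l => mpPow A l i k) (Finset.mem_range.mpr hlt)
      · have : m + 1 = n := by omega
        rw [this]
        exact mp_pow_n_le_star A hTr i k
    calc A i j + (mpStar A j k + ((u k : ℝ) : WithBot ℝ))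
        = (A i j + mpStar A j k) + ((u k : ℝ) : WithBot ℝ) := by rw [add_assoc]
      _ ≤ mpStar A i k + ((u k : ℝ) : WithBot ℝ) := add_le_add_left hstar _
      _ ≤ _ := Finset.le_sup (f := fun l => mpStar A i l + ((u l : ℝ) : WithBot ℝ))
          (Finset.mem_univ k)
end

section
/- Let A be an n×n matrix over the max-plus algebra and suppose x ∈ ℝⁿ is a regular vector with A x ≤ x. Then Tr(A) ≤ 𝟙, i.e., tr(A^m) ≤ 0 for all m = 1,…,n. -/
open Finset

/-- If a regular vector `x ∈ ℝⁿ` satisfies `A x ≤ x`, then `Tr(A) ≤ 𝟙`,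
i.e. `tr(A^m) ≤ 0` for all `m = 1,…,n`. -/
theorem maxplus_Ax_le_x_Tr (n : ℕ) (A : Fin n → Fin n → WithBot ℝ)
    (x : Fin n → ℝ)
    (hx : ∀ i : Fin n,
      mpMulVec A (fun j => ((x j : ℝ) : WithBot ℝ)) i ≤ ((x i : ℝ) : WithBot ℝ)) :
    ∀ m : ℕ, 1 ≤ m → m ≤ n → mpTr (mpPow A m) ≤ ((0 : ℝ) : WithBot ℝ) := by
  -- auxiliary: sup_add_le
  have sup_add_le : ∀ {α : Type} (s : Finset α) (f : α → WithBot ℝ)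
      (c b : WithBot ℝ), (∀ k ∈ s, f k + c ≤ b) → s.sup f + c ≤ b := by
    intro α s f c b h
    rcases s.eq_empty_or_nonempty with rfl | hs
    · simp
    · obtain ⟨k, hk, hsup⟩ := Finset.exists_mem_eq_sup s hs f
      rw [hsup]; exact h k hk
  have hpow : ∀ m : ℕ, ∀ i : Fin n,
      mpMulVec (mpPow A m) (fun j => ((x j : ℝ) : WithBot ℝ)) i
        ≤ ((x i : ℝ) : WithBot ℝ) := by
    intro m
    induction m with
    | zero =>
        intro i
        apply Finset.sup_le
        intro j _
        simp only [mpPow, mpId]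
        by_cases h : i = j
        · subst h; simp
        · simp [h]
    | succ m ih =>
        intro i
        apply Finset.sup_le
        intro j _
        simp only [mpPow, mpMul]
        apply sup_add_le
        intro k _
        calc A i k + mpPow A m k j + ((x j : ℝ) : WithBot ℝ)
            = A i k + (mpPow A m k j + ((x j : ℝ) : WithBot ℝ)) := by
              rw [add_assoc]
          _ ≤ A i k + ((x k : ℝ) : WithBot ℝ) := by
              apply add_le_add_right
              exact le_trans (Finset.le_sup (f := fun j => mpPow A m k j + ((x j : ℝ) : WithBot ℝ)) (Finset.mem_univ j)) (ih k)
          _ ≤ ((x i : ℝ) : WithBot ℝ) := by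
              exact le_trans (Finset.le_sup (f := fun k => A i k + ((x k : ℝ) : WithBot ℝ)) (Finset.mem_univ k)) (hx i)
  intro m _ _
  apply Finset.sup_le
  intro i _
  have h1 : mpPow A m i i + ((x i : ℝ) : WithBot ℝ) ≤ ((x i : ℝ) : WithBot ℝ) :=
    le_trans (Finset.le_sup (f := fun j => mpPow A m i j + ((x j : ℝ) : WithBot ℝ)) (Finset.mem_univ i)) (hpow m i)
  have h2 : mpPow A m i i + ((x i : ℝ) : WithBot ℝ)
      ≤ ((0 : ℝ) : WithBot ℝ) + ((x i : ℝ) : WithBot ℝ) := by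
    rw [show ((0:ℝ):WithBot ℝ) + ((x i : ℝ) : WithBot ℝ) = ((x i : ℝ) : WithBot ℝ) by rw [← WithBot.coe_add, zero_add]]; exact h1
  exact (WithBot.add_le_add_iff_right (by exact WithBot.coe_ne_bot)).mp h2
end

section
/- Let A be an n×n matrix over the max-plus algebra with finite spectral radius λ (λ = max_{1≤m≤n} tr(A^m)/m). Then for every regular vector x ∈ ℝⁿ, x⁻ A x ≥ λ, i.e., max_{i,j} (a_{ij} + x_j − x_i) ≥ λ. -/
open Finset

/-- The max-plus spectral radius `λ = max_{1≤m≤n} tr(A^m)/m`. -/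
noncomputable def mpLam {n : ℕ} (A : Fin n → Fin n → WithBot ℝ) : WithBot ℝ :=
  (Icc 1 n).sup fun m => WithBot.map (fun a => a / (m : ℝ)) (mpTr (mpPow A m))

lemma mpPow_bound {n : ℕ} (A : Fin n → Fin n → WithBot ℝ) (x : Fin n → ℝ) (s : ℝ)
    (h : ∀ i j, A i j ≤ ((s + x i - x j : ℝ) : WithBot ℝ)) :
    ∀ m i j, mpPow A m i j ≤ (((m : ℝ) * s + x i - x j : ℝ) : WithBot ℝ) := by
  intro m
  induction m with
  | zero =>
    intro i j
    simp only [mpPow, mpId]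
    split
    · next hij => subst hij; simp
    · exact bot_le
  | succ m ih =>
    intro i j
    simp only [mpPow, mpMul]
    apply Finset.sup_le
    intro k _
    calc A i k + mpPow A m k j
        ≤ ((s + x i - x k : ℝ) : WithBot ℝ) + (((m : ℝ) * s + x k - x j : ℝ) : WithBot ℝ) :=
          add_le_add (h i k) (ih k j)
      _ = (((m + 1 : ℕ) : ℝ) * s + x i - x j : ℝ) := by
          rw [← WithBot.coe_add, WithBot.coe_eq_coe]
          push_cast
          ring

/-- If the spectral radius `λ` of `A` is finite, then for every regular vector
`x ∈ ℝⁿ`, `x⁻ A x ≥ λ`, i.e. `max_{i,j} (a_{ij} + x_j − x_i) ≥ λ`. -/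
theorem maxplus_xAx_ge_lam (n : ℕ) (A : Fin n → Fin n → WithBot ℝ) (l : ℝ)
    (hl : mpLam A = (l : WithBot ℝ)) (x : Fin n → ℝ) :
    ((l : ℝ) : WithBot ℝ) ≤
      univ.sup fun i => univ.sup fun j =>
        ((-x i : ℝ) : WithBot ℝ) + A i j + ((x j : ℝ) : WithBot ℝ) := by
  set S : WithBot ℝ := univ.sup fun i => univ.sup fun j =>
      ((-x i : ℝ) : WithBot ℝ) + A i j + ((x j : ℝ) : WithBot ℝ) with hS
  -- n > 0
  rcases Nat.eq_zero_or_pos n with hn | hn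
  · subst hn
    simp [mpLam] at hl
  -- get m attaining the sup
  have hne : (Icc 1 n).Nonempty := ⟨1, Finset.mem_Icc.mpr ⟨le_refl 1, hn⟩⟩
  obtain ⟨m, hm, hmeq⟩ := Finset.exists_mem_eq_sup (Icc 1 n) hne
    (fun m => WithBot.map (fun a => a / (m : ℝ)) (mpTr (mpPow A m)))
  rw [mpLam, hmeq] at hl
  have hm1 : 1 ≤ m := (Finset.mem_Icc.mp hm).1
  have hmR : (0 : ℝ) < (m : ℝ) := by exact_mod_cast hm1
  -- tr(A^m) = l * m
  obtain ⟨t, ht⟩ : ∃ t : ℝ, mpTr (mpPow A m) = (t : WithBot ℝ) := by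
    cases htr : mpTr (mpPow A m) with
    | bot =>
      rw [htr] at hl
      simp only [WithBot.map_bot] at hl
      exact absurd hl (by simp)
    | coe t => exact ⟨t, rfl⟩
  rw [ht] at hl
  simp only [WithBot.map_coe, WithBot.coe_eq_coe] at hl
  have htl : t = l * (m : ℝ) := by field_simp at hl ⊢; linarith [hl]
  -- S ≠ ⊥
  cases hSc : S with
  | bot =>
    exfalso
    have hAbot : ∀ i j, A i j = ⊥ := by
      intro i j
      have h2 : ((-x i : ℝ) : WithBot ℝ) + A i j + ((x j : ℝ) : WithBot ℝ) ≤
          univ.sup fun j => ((-x i : ℝ) : WithBot ℝ) + A i j + ((x j : ℝ) : WithBot ℝ) :=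
        Finset.le_sup (f := fun j => ((-x i : ℝ) : WithBot ℝ) + A i j + ((x j : ℝ) : WithBot ℝ)) (mem_univ j)
      have h1 : ((-x i : ℝ) : WithBot ℝ) + A i j + ((x j : ℝ) : WithBot ℝ) ≤ S :=
        le_trans h2 (Finset.le_sup (f := fun i => univ.sup fun j => ((-x i : ℝ) : WithBot ℝ) + A i j + ((x j : ℝ) : WithBot ℝ)) (mem_univ i))
      rw [hSc, le_bot_iff] at h1
      rcases WithBot.add_eq_bot.mp h1 with h2 | h2
      · rcases WithBot.add_eq_bot.mp h2 with h3 | h3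
        · exact absurd h3 (WithBot.coe_ne_bot)
        · exact h3
      · exact absurd h2 (WithBot.coe_ne_bot)
    have hpow : mpPow A m = fun _ _ => ⊥ := by
      obtain ⟨m', rfl⟩ := Nat.exists_eq_succ_of_ne_zero (by omega : m ≠ 0)
      funext i j
      simp only [mpPow, mpMul]
      apply le_bot_iff.mp
      apply Finset.sup_le
      intro k _
      rw [hAbot i k, WithBot.bot_add]
    rw [hpow] at ht
    simp [mpTr] at ht
  | coe s =>
    -- bound entries of A
    have hA : ∀ i j, A i j ≤ ((s + x i - x j : ℝ) : WithBot ℝ) := by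
      intro i j
      have h2 : ((-x i : ℝ) : WithBot ℝ) + A i j + ((x j : ℝ) : WithBot ℝ) ≤
          univ.sup fun j => ((-x i : ℝ) : WithBot ℝ) + A i j + ((x j : ℝ) : WithBot ℝ) :=
        Finset.le_sup (f := fun j => ((-x i : ℝ) : WithBot ℝ) + A i j + ((x j : ℝ) : WithBot ℝ)) (mem_univ j)
      have h1 : ((-x i : ℝ) : WithBot ℝ) + A i j + ((x j : ℝ) : WithBot ℝ) ≤ (s : WithBot ℝ) := by
        rw [← hSc]
        exact le_trans h2 (Finset.le_sup (f := fun i => univ.sup fun j => ((-x i : ℝ) : WithBot ℝ) + A i j + ((x j : ℝ) : WithBot ℝ)) (mem_univ i))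
      cases hij : A i j with
      | bot => exact bot_le
      | coe a =>
        rw [hij, ← WithBot.coe_add, ← WithBot.coe_add, WithBot.coe_le_coe] at h1
        rw [WithBot.coe_le_coe]
        linarith
    -- tr bound
    have htr : mpTr (mpPow A m) ≤ (((m : ℝ) * s : ℝ) : WithBot ℝ) := by
      apply Finset.sup_le
      intro i _
      have := mpPow_bound A x s hA m i i
      simpa using this
    rw [ht, WithBot.coe_le_coe, htl] at htr
    rw [WithBot.coe_le_coe]
    nlinarith
end
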